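/- Let T* > 0, and let w : [0,1] × ℝ × [0,T*) → ℝ be a C² function (smooth in η, ξ, t) satisfying the degenerate parabolic equation -∂ₜw - η ∂_ξ w + w² ∂²_{ηη} w = 0 on (0,1) × ℝ × (0,T*), with ∂_η w = 0 at η = 0 and w = 0 at η = 1. Assume there exists C > 0 such that w(η,ξ,t) ≤ C(1-η) on the parabolic boundary set {t=0} ∪ {η=1} and in the limit |ξ| → ∞ (uniformly). Then w(η,ξ,t) ≤ C(1-η) for all (η,ξ,t) ∈ [0,1] × ℝ × [0,T*). -/

import Mathlib

open Set Filter Topology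

section helpers
lemma deriv_nonneg_of_isMaxOn_right {g : ℝ → ℝ} {a b : ℝ} (hab : a < b)
    (hg : DifferentiableAt ℝ g b) (hmax : IsMaxOn g (Set.Icc a b) b) :
    0 ≤ deriv g b := by
  have hs : Filter.Tendsto (slope g b) (𝓝[<] b) (𝓝 (deriv g b)) :=
    ((hasDerivAt_iff_tendsto_slope).1 hg.hasDerivAt).mono_left
      (nhdsWithin_mono _ (fun x hx => ne_of_lt hx))
  refine ge_of_tendsto hs ?_
  filter_upwards [Ioo_mem_nhdsLT_of_mem (by exact ⟨hab, le_refl b⟩ : b ∈ Set.Ioc a b)] with x hx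
  have h1 : g x - g b ≤ 0 := sub_nonpos.2 (hmax ⟨hx.1.le, hx.2.le⟩)
  have h2 : x - b ≤ 0 := sub_nonpos.2 hx.2.le
  rw [slope_def_field]
  exact div_nonneg_of_nonpos h1 h2

lemma deriv_nonpos_of_isMaxOn_left {g : ℝ → ℝ} {a b : ℝ} (hab : a < b)
    (hg : DifferentiableAt ℝ g a) (hmax : IsMaxOn g (Set.Icc a b) a) :
    deriv g a ≤ 0 := by
  have hs : Filter.Tendsto (slope g a) (𝓝[>] a) (𝓝 (deriv g a)) :=
    ((hasDerivAt_iff_tendsto_slope).1 hg.hasDerivAt).mono_left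
      (nhdsWithin_mono _ (fun x hx => ne_of_gt hx))
  refine le_of_tendsto hs ?_
  filter_upwards [Ioo_mem_nhdsGT_of_mem (by exact ⟨le_refl a, hab⟩ : a ∈ Set.Ico a b)] with x hx
  have h1 : g x - g a ≤ 0 := sub_nonpos.2 (hmax ⟨hx.1.le, hx.2.le⟩)
  have h2 : 0 ≤ x - a := sub_nonneg.2 hx.1.le
  rw [slope_def_field]
  exact div_nonpos_of_nonpos_of_nonneg h1 h2

lemma second_deriv_nonpos_at_localmax {g : ℝ → ℝ} (hg : ContDiff ℝ 2 g) {a : ℝ}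
    (hmax : IsLocalMax g a) : deriv (deriv g) a ≤ 0 := by
  by_contra hpos
  push_neg at hpos
  have hg1 : ContDiff ℝ 1 (deriv g) :=
    ((contDiff_succ_iff_deriv (n := 1)).1
      (by rw [one_add_one_eq_two]; exact hg : ContDiff ℝ (1+1) g)).2.2
  have hgd : Differentiable ℝ g := hg.differentiable (by norm_num)
  have hgd' : DifferentiableAt ℝ (deriv g) a := (hg1.differentiable one_ne_zero) a
  have hda : deriv g a = 0 := hmax.deriv_eq_zero
  have hs : Filter.Tendsto (slope (deriv g) a) (𝓝[≠] a) (𝓝 (deriv (deriv g) a)) :=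
    (hasDerivAt_iff_tendsto_slope).1 hgd'.hasDerivAt
  have hev : ∀ᶠ x in 𝓝[≠] a, 0 < slope (deriv g) a x :=
    hs.eventually (eventually_gt_nhds hpos)
  have hev3 : ∀ᶠ x in 𝓝[≠] a, 0 < slope (deriv g) a x ∧ g x ≤ g a :=
    hev.and (eventually_nhdsWithin_of_eventually_nhds hmax)
  rw [eventually_nhdsWithin_iff] at hev3
  rw [Metric.eventually_nhds_iff] at hev3
  obtain ⟨δ, hδ, hball⟩ := hev3
  set b := a + δ/2 with hb
  have hab : a < b := by simp only [hb]; linarith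
  have hmono : StrictMonoOn g (Set.Icc a b) := by
    apply strictMonoOn_of_deriv_pos (convex_Icc a b) (hgd.continuous.continuousOn)
    intro x hx
    rw [interior_Icc] at hx
    have hxne : x ≠ a := ne_of_gt hx.1
    have hdist : dist x a < δ := by
      rw [Real.dist_eq, abs_of_pos (sub_pos.2 hx.1)]
      have := hx.2
      simp only [hb] at this
      linarith
    have h1 := (hball hdist hxne).1
    rw [slope_def_field, hda, sub_zero] at h1
    have hx0 : 0 < x - a := sub_pos.2 hx.1
    have h2 := mul_pos h1 hx0
    rwa [div_mul_cancel₀ _ (ne_of_gt hx0)] at h2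
  have hlt : g a < g b := hmono (Set.left_mem_Icc.2 hab.le) (Set.right_mem_Icc.2 hab.le) hab
  have hdistb : dist b a < δ := by
    rw [Real.dist_eq, abs_of_pos (sub_pos.2 hab)]
    simp only [hb]; linarith
  have := (hball hdistb (ne_of_gt hab)).2
  linarith

lemma deriv_diff_of_contDiff2 {g : ℝ → ℝ} (hg : ContDiff ℝ 2 g) :
    Differentiable ℝ (deriv g) :=
  (((contDiff_succ_iff_deriv (n := 1)).1
    (by rw [one_add_one_eq_two]; exact hg : ContDiff ℝ (1+1) g)).2.2).differentiable one_ne_zero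

lemma hasDerivAt_phi (ε C e : ℝ) :
    HasDerivAt (fun e : ℝ => ε*(1-e)^3 - (ε+C)*(1-e)) ((ε+C) - 3*ε*(1-e)^2) e := by
  have h0 : HasDerivAt (fun e : ℝ => 1-e) (-1) e := by
    simpa using (hasDerivAt_id e).const_sub 1
  have h1 := (h0.pow 3).const_mul ε
  have h2 := h0.const_mul (ε+C)
  exact (h1.sub h2).congr_deriv (by norm_num; ring)

lemma hasDerivAt_phi' (ε C e : ℝ) :
    HasDerivAt (fun e : ℝ => (ε+C) - 3*ε*(1-e)^2) (6*ε*(1-e)) e := by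
  have h0 : HasDerivAt (fun e : ℝ => 1-e) (-1) e := by
    simpa using (hasDerivAt_id e).const_sub 1
  have h1 := (h0.pow 2).const_mul (3*ε)
  have h2 := (hasDerivAt_const e (ε+C)).sub h1
  exact h2.congr_deriv (by norm_num; ring)

lemma contDiff_phi (ε C : ℝ) : ContDiff ℝ 2 (fun e : ℝ => ε*(1-e)^3 - (ε+C)*(1-e)) := by
  apply ContDiff.sub
  · exact contDiff_const.mul ((contDiff_const.sub contDiff_id).pow 3)
  · exact contDiff_const.mul (contDiff_const.sub contDiff_id)
end helpers

theorem crocco_upper_bound (Tstar C : ℝ) (hT : 0 < Tstar) (hC : 0 < C)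
    (w : ℝ → ℝ → ℝ → ℝ)
    (hsmooth : ContDiff ℝ 2 (fun p : ℝ × ℝ × ℝ => w p.1 p.2.1 p.2.2))
    (heq : ∀ η ∈ Set.Ioo (0:ℝ) 1, ∀ ξ : ℝ, ∀ t ∈ Set.Ioo (0:ℝ) Tstar,
      -(deriv (fun s => w η ξ s) t) - η * deriv (fun x => w η x t) ξ
        + (w η ξ t)^2 * deriv (deriv (fun e => w e ξ t)) η = 0)
    (hneu : ∀ ξ : ℝ, ∀ t ∈ Set.Ico (0:ℝ) Tstar, deriv (fun e => w e ξ t) 0 = 0)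
    (hdir : ∀ ξ : ℝ, ∀ t ∈ Set.Ico (0:ℝ) Tstar, w 1 ξ t = 0)
    (hinit : ∀ η ∈ Set.Icc (0:ℝ) 1, ∀ ξ : ℝ, w η ξ 0 ≤ C * (1 - η))
    (hinf : ∀ ε > (0:ℝ), ∃ R : ℝ, ∀ η ∈ Set.Icc (0:ℝ) 1, ∀ ξ : ℝ,
      ∀ t ∈ Set.Ico (0:ℝ) Tstar, R ≤ |ξ| → w η ξ t ≤ C * (1 - η) + ε) :
    ∀ η ∈ Set.Icc (0:ℝ) 1, ∀ ξ : ℝ, ∀ t ∈ Set.Ico (0:ℝ) Tstar,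
      w η ξ t ≤ C * (1 - η) := by
  -- slice smoothness facts
  have hT' := hT
  have sliceT : ∀ η ξ : ℝ, ContDiff ℝ 2 (fun s => w η ξ s) := fun η ξ =>
    hsmooth.comp ((contDiff_const.prodMk (contDiff_const.prodMk contDiff_id)))
  have sliceX : ∀ η t : ℝ, ContDiff ℝ 2 (fun x => w η x t) := fun η t =>
    hsmooth.comp ((contDiff_const.prodMk (contDiff_id.prodMk contDiff_const)))
  have sliceE : ∀ ξ t : ℝ, ContDiff ℝ 2 (fun e => w e ξ t) := fun ξ t =>
    hsmooth.comp ((contDiff_id.prodMk (contDiff_const.prodMk contDiff_const)))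
  -- KEY: barrier bound for each small ε
  have key : ∀ ε : ℝ, 0 < ε → ε < C/2 → ∀ η ∈ Set.Icc (0:ℝ) 1, ∀ ξ : ℝ,
      ∀ t ∈ Set.Ico (0:ℝ) Tstar,
      w η ξ t + (ε*(1-η)^3 - (ε+C)*(1-η)) ≤ 0 := by
    intro ε hε hεC
    by_contra hcon
    push_neg at hcon
    obtain ⟨η₂, hη₂, ξ₂, t₂, ht₂, hm⟩ := hcon
    set f : ℝ → ℝ → ℝ → ℝ := fun η ξ t => w η ξ t + (ε*(1-η)^3 - (ε+C)*(1-η)) with hf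
    set m : ℝ := f η₂ ξ₂ t₂ with hmdef
    have hm0 : 0 < m := hm
    obtain ⟨R₀, hR₀⟩ := hinf (m/2) (by linarith)
    set R : ℝ := max R₀ (|ξ₂| + 1) with hR
    set K : Set (ℝ × ℝ × ℝ) := Set.Icc 0 1 ×ˢ Set.Icc (-R) R ×ˢ Set.Icc 0 t₂ with hK
    have hKc : IsCompact K := (isCompact_Icc.prod (isCompact_Icc.prod isCompact_Icc))
    set F : ℝ × ℝ × ℝ → ℝ := fun p => f p.1 p.2.1 p.2.2 with hF
    have hFc : Continuous F := by
      apply hsmooth.continuous.add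
      fun_prop
    have hξ₂R : |ξ₂| ≤ R := le_trans (by linarith [abs_nonneg ξ₂]) (le_max_right _ _)
    have hp₂K : (η₂, ξ₂, t₂) ∈ K :=
      ⟨hη₂, ⟨(abs_le.1 hξ₂R).1, (abs_le.1 hξ₂R).2⟩, ht₂.1, le_refl t₂⟩
    obtain ⟨p₀, hp₀K, hp₀max⟩ := hKc.exists_isMaxOn ⟨(η₂, ξ₂, t₂), hp₂K⟩ hFc.continuousOn
    obtain ⟨hη₀, hξ₀, ht₀⟩ := hp₀K
    set η₀ : ℝ := p₀.1
    set ξ₀ : ℝ := p₀.2.1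
    set t₀ : ℝ := p₀.2.2
    have hmax : m ≤ F p₀ := hp₀max hp₂K
    have ht₂T : t₂ < Tstar := ht₂.2
    have ht₀T : t₀ ∈ Set.Ico (0:ℝ) Tstar := ⟨ht₀.1, lt_of_le_of_lt ht₀.2 ht₂T⟩
    -- basic nonlinear fact: the barrier is ≤ 0 when w ≤ C(1-η)
    have hbar : ∀ η : ℝ, ε*(1-η)^3 - (ε+C)*(1-η) = -(C*(1-η)) - ε*(1-η)*(η*(2-η)) := by
      intro η; ring
    -- (a) 0 < t₀
    have ht₀pos : 0 < t₀ := by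
      rcases lt_or_eq_of_le ht₀.1 with h | h
      · exact h
      · exfalso
        have h0 : F p₀ = w η₀ ξ₀ t₀ + (ε*(1-η₀)^3 - (ε+C)*(1-η₀)) := rfl
        rw [← h] at h0
        have hw0 := hinit η₀ hη₀ ξ₀
        have hb := hbar η₀
        nlinarith [mul_nonneg (mul_nonneg hε.le (by linarith [hη₀.2] : (0:ℝ) ≤ 1 - η₀))
          (mul_nonneg hη₀.1 (by linarith [hη₀.2] : (0:ℝ) ≤ 2 - η₀))]
    -- (b) η₀ < 1
    have hη₀lt : η₀ < 1 := by
      rcases lt_or_eq_of_le hη₀.2 with h | h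
      · exact h
      · exfalso
        have h0 : F p₀ = w η₀ ξ₀ t₀ + (ε*(1-η₀)^3 - (ε+C)*(1-η₀)) := rfl
        rw [h] at h0
        rw [hdir ξ₀ t₀ ht₀T] at h0
        norm_num at h0
        linarith
    -- (c) 0 < η₀
    have hη₀pos : 0 < η₀ := by
      rcases lt_or_eq_of_le hη₀.1 with h | h
      · exact h
      · exfalso
        have hgmax : IsMaxOn (fun e => w e ξ₀ t₀ + (ε*(1-e)^3 - (ε+C)*(1-e)))
            (Set.Icc 0 1) 0 := by
          intro e he
          have hmem : ((e, ξ₀, t₀) : ℝ × ℝ × ℝ) ∈ K := ⟨he, hξ₀, ht₀⟩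
          have h2 : f e ξ₀ t₀ ≤ F p₀ := hp₀max hmem
          have h3 : F p₀ = w η₀ ξ₀ t₀ + (ε*(1-η₀)^3 - (ε+C)*(1-η₀)) := rfl
          rw [← h] at h3
          simp only [Set.mem_setOf_eq]
          rw [h3] at h2
          exact h2
        have hdiff : DifferentiableAt ℝ (fun e => w e ξ₀ t₀ + (ε*(1-e)^3 - (ε+C)*(1-e))) 0 :=
          (((sliceE ξ₀ t₀).differentiable (by norm_num)) 0).add
            (hasDerivAt_phi ε C 0).differentiableAt
        have hd0 := deriv_nonpos_of_isMaxOn_left one_pos hdiff hgmax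
        rw [deriv_fun_add (((sliceE ξ₀ t₀).differentiable (by norm_num)) 0)
          (hasDerivAt_phi ε C 0).differentiableAt, (hasDerivAt_phi ε C 0).deriv,
          hneu ξ₀ t₀ ht₀T] at hd0
        norm_num at hd0
        linarith
    -- (d) |ξ₀| < R
    have hξ₀lt : |ξ₀| < R := by
      rcases lt_or_ge |ξ₀| R with h | h
      · exact h
      · exfalso
        have hw := hR₀ η₀ hη₀ ξ₀ t₀ ht₀T (le_trans (le_max_left _ _) h)
        have h0 : F p₀ = w η₀ ξ₀ t₀ + (ε*(1-η₀)^3 - (ε+C)*(1-η₀)) := rfl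
        have hb := hbar η₀
        have hP : (0:ℝ) ≤ ε*(1-η₀)*(η₀*(2-η₀)) :=
          mul_nonneg (mul_nonneg hε.le (by linarith [hη₀.2]))
            (mul_nonneg hη₀.1 (by linarith [hη₀.2]))
        clear_value m F f R K η₀ ξ₀ t₀
        linarith [hmax, h0, hw, hb, hP, hm0]
    -- (e) w p₀ ≠ 0
    have hwne : w η₀ ξ₀ t₀ ≠ 0 := by
      intro hw0
      have h0 : F p₀ = w η₀ ξ₀ t₀ + (ε*(1-η₀)^3 - (ε+C)*(1-η₀)) := rfl
      have hb := hbar η₀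
      nlinarith [mul_nonneg (mul_nonneg hε.le (by linarith [hη₀.2] : (0:ℝ) ≤ 1 - η₀))
        (mul_nonneg hη₀.1 (by linarith [hη₀.2] : (0:ℝ) ≤ 2 - η₀)),
        mul_nonneg hC.le (by linarith [hη₀.2] : (0:ℝ) ≤ 1 - η₀)]
    -- (f) time derivative ≥ 0
    have hA : 0 ≤ deriv (fun s => w η₀ ξ₀ s) t₀ := by
      have hgmax : IsMaxOn (fun s => w η₀ ξ₀ s + (ε*(1-η₀)^3 - (ε+C)*(1-η₀)))
          (Set.Icc 0 t₀) t₀ := by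
        intro s hs
        have hmem : ((η₀, ξ₀, s) : ℝ × ℝ × ℝ) ∈ K := ⟨hη₀, hξ₀, hs.1, le_trans hs.2 ht₀.2⟩
        exact hp₀max hmem
      have hdiff : DifferentiableAt ℝ (fun s => w η₀ ξ₀ s + (ε*(1-η₀)^3 - (ε+C)*(1-η₀))) t₀ :=
        (((sliceT η₀ ξ₀).differentiable (by norm_num)) t₀).add_const _
      have hd := deriv_nonneg_of_isMaxOn_right ht₀pos hdiff hgmax
      rwa [deriv_add_const] at hd
    -- (g) ξ derivative = 0
    have hB : deriv (fun x => w η₀ x t₀) ξ₀ = 0 := by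
      have hloc : IsLocalMax (fun x => w η₀ x t₀ + (ε*(1-η₀)^3 - (ε+C)*(1-η₀))) ξ₀ := by
        filter_upwards [Ioo_mem_nhds (abs_lt.1 hξ₀lt).1 (abs_lt.1 hξ₀lt).2] with x hx
        have hmem : ((η₀, x, t₀) : ℝ × ℝ × ℝ) ∈ K := ⟨hη₀, ⟨hx.1.le, hx.2.le⟩, ht₀⟩
        exact hp₀max hmem
      have hz := hloc.deriv_eq_zero
      rwa [deriv_add_const] at hz
    -- (h) second η-derivative ≤ -6ε(1-η₀)
    have hD : deriv (deriv (fun e => w e ξ₀ t₀)) η₀ ≤ -(6*ε*(1-η₀)) := by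
      have hg2 : ContDiff ℝ 2 (fun e => w e ξ₀ t₀ + (ε*(1-e)^3 - (ε+C)*(1-e))) :=
        (sliceE ξ₀ t₀).add (contDiff_phi ε C)
      have hloc : IsLocalMax (fun e => w e ξ₀ t₀ + (ε*(1-e)^3 - (ε+C)*(1-e))) η₀ := by
        filter_upwards [Ioo_mem_nhds hη₀pos hη₀lt] with e he
        have hmem : ((e, ξ₀, t₀) : ℝ × ℝ × ℝ) ∈ K := ⟨⟨he.1.le, he.2.le⟩, hξ₀, ht₀⟩
        exact hp₀max hmem
      have hD2 := second_deriv_nonpos_at_localmax hg2 hloc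
      have hderiv : deriv (fun e => w e ξ₀ t₀ + (ε*(1-e)^3 - (ε+C)*(1-e)))
          = fun e => deriv (fun e' => w e' ξ₀ t₀) e + ((ε+C) - 3*ε*(1-e)^2) := by
        funext e
        rw [deriv_fun_add (((sliceE ξ₀ t₀).differentiable (by norm_num)) e)
          (hasDerivAt_phi ε C e).differentiableAt, (hasDerivAt_phi ε C e).deriv]
      rw [hderiv] at hD2
      rw [deriv_fun_add ((deriv_diff_of_contDiff2 (sliceE ξ₀ t₀)) η₀)
        (hasDerivAt_phi' ε C η₀).differentiableAt, (hasDerivAt_phi' ε C η₀).deriv] at hD2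
      linarith
    -- conclude via the PDE
    have heqn := heq η₀ ⟨hη₀pos, hη₀lt⟩ ξ₀ t₀ ⟨ht₀pos, ht₀T.2⟩
    rw [hB] at heqn
    have hw2 : 0 < (w η₀ ξ₀ t₀)^2 :=
      lt_of_le_of_ne (sq_nonneg _) (Ne.symm (pow_ne_zero 2 hwne))
    have h6 : 0 < 6*ε*(1-η₀) := by nlinarith
    nlinarith [mul_le_mul_of_nonneg_left hD hw2.le, mul_pos hw2 h6]
  -- final: let ε → 0
  intro η hη ξ t ht
  by_contra hlt
  push_neg at hlt
  have hεbound : ∀ ε : ℝ, 0 < ε → ε < C/2 → w η ξ t ≤ C*(1-η) + ε := by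
    intro ε hε hεC
    have hk := key ε hε hεC η hη ξ t ht
    have h1 : (0:ℝ) ≤ ε * (1-η)^3 :=
      mul_nonneg hε.le (pow_nonneg (by linarith [hη.2]) 3)
    have h2 : ε * (1-η) ≤ ε :=
      mul_le_of_le_one_right hε.le (by linarith [hη.1])
    nlinarith [h1, h2]
  set d : ℝ := w η ξ t - C*(1-η) with hd
  have hd0 : 0 < d := by simp only [hd]; linarith
  have hεpos : 0 < min (d/2) (C/4) := lt_min (by linarith) (by linarith)
  have := hεbound (min (d/2) (C/4)) hεpos
    (lt_of_le_of_lt (min_le_right _ _) (by linarith))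
  have hmin : min (d/2) (C/4) ≤ d/2 := min_le_left _ _
  simp only [hd] at this hmin
  linarith
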